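/- Let Q ⊆ ℝ^d be a polytope (the convex hull of a nonempty finite set) and let F be an exposed face of Q with F ≠ Q. Then the total number of exposed faces of Q is at most twice the number of exposed faces of Q that are not contained in F; i.e. Set.ncard {G : Set (EuclideanSpace ℝ (Fin d)) | IsExposed ℝ Q G} ≤ 2 * Set.ncard {G | IsExposed ℝ Q G ∧ ¬ G ⊆ F}. (This is the paper's Lemma φ̄ ≤ 2(φ−1): taking Q to be a projective closure of a pointed unbounded polyhedron P and F its far face, the faces of P correspond exactly to the empty face together with the faces of Q not contained in F, so the size φ̄ of the face lattice of Q is at most 2(φ−1), where φ is the number of faces of P.) -/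

import Mathlib

/-- Key lemma: every exposed face `G` of `Q = conv S` contained in an exposed face `F ≠ Q`
is of the form `G' ∩ F` for some exposed face `G'` not contained in `F`. -/
lemma exposed_key {d : ℕ} (S : Set (EuclideanSpace ℝ (Fin d))) (hS : S.Finite)
    (hSne : S.Nonempty) (F : Set (EuclideanSpace ℝ (Fin d)))
    (hF : IsExposed ℝ (convexHull ℝ S) F) (hFQ : F ≠ convexHull ℝ S)
    (G : Set (EuclideanSpace ℝ (Fin d))) (hG : IsExposed ℝ (convexHull ℝ S) G)
    (hGF : G ⊆ F) :
    ∃ G', (IsExposed ℝ (convexHull ℝ S) G' ∧ ¬ G' ⊆ F) ∧ G' ∩ F = G := by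
  classical
  set Q := convexHull ℝ S with hQdef
  have hQne : Q.Nonempty := hSne.mono (subset_convexHull ℝ S)
  rcases F.eq_empty_or_nonempty with hFe | hFne
  · -- F = ∅, take G' = Q
    refine ⟨Q, ⟨fun _ => ⟨0, ?_⟩, ?_⟩, ?_⟩
    · ext x; simp
    · rw [hFe]; simpa [Set.subset_empty_iff] using hQne.ne_empty
    · rw [hFe, Set.inter_empty]
      exact (Set.subset_empty_iff.mp (hFe ▸ hGF)).symm
  · obtain ⟨l, hFd⟩ := hF hFne
    obtain ⟨x₁, hx₁⟩ := hFne
    have hx₁' : x₁ ∈ Q ∧ ∀ y ∈ Q, l y ≤ l x₁ := by rw [hFd] at hx₁; exact hx₁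
    set c := l x₁ with hc
    have hle : ∀ y ∈ Q, l y ≤ c := hx₁'.2
    have hFval : ∀ x ∈ F, x ∈ Q ∧ l x = c := by
      intro x hx
      rw [hFd] at hx
      exact ⟨hx.1, le_antisymm (hle x hx.1) (hx.2 x₁ hx₁'.1)⟩
    have hmemF : ∀ x ∈ Q, l x = c → x ∈ F := by
      intro x hxQ hxc
      rw [hFd]
      exact ⟨hxQ, fun y hy => (hle y hy).trans_eq hxc.symm⟩
    have hSF : ¬ S ⊆ F := by
      intro h
      apply hFQ
      refine subset_antisymm hF.subset ?_
      exact convexHull_min h (hF.convex (convex_convexHull ℝ S))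
    obtain ⟨s₀, hs₀S, hs₀F⟩ := Set.not_subset.mp hSF
    rcases G.eq_empty_or_nonempty with hGe | hGne
    · -- G = ∅, take G' = argmin of l
      refine ⟨{x ∈ Q | ∀ y ∈ Q, (-l) y ≤ (-l) x}, ⟨fun _ => ⟨-l, rfl⟩, ?_⟩, ?_⟩
      · -- not contained in F
        obtain ⟨z, hzQ, hz⟩ := (hS.isCompact_convexHull ℝ).exists_isMinOn hQne l.continuous.continuousOn
        intro hsub
        have hzG : z ∈ {x ∈ Q | ∀ y ∈ Q, (-l) y ≤ (-l) x} :=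
          ⟨hzQ, fun y hy => by simpa using hz hy⟩
        have hzF := hsub hzG
        apply hFQ
        refine subset_antisymm hF.subset ?_
        intro y hy
        refine hmemF y hy (le_antisymm (hle y hy) ?_)
        have h1 : l z ≤ l y := by simpa using hzG.2 y hy
        have h2 : l z = c := (hFval z hzF).2
        linarith
      · rw [hGe]
        ext x
        simp only [Set.mem_inter_iff, Set.mem_setOf_eq, Set.mem_empty_iff_false, iff_false]
        rintro ⟨⟨hxQ, hxmin⟩, hxF⟩
        apply hFQ
        refine subset_antisymm hF.subset ?_
        intro y hy
        refine hmemF y hy (le_antisymm (hle y hy) ?_)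
        have h1 : l x ≤ l y := by simpa using hxmin y hy
        have h2 : l x = c := (hFval x hxF).2
        linarith
    · obtain ⟨m, hGd⟩ := hG hGne
      obtain ⟨x₀, hx₀⟩ := hGne
      have hx₀' : x₀ ∈ Q ∧ ∀ y ∈ Q, m y ≤ m x₀ := by rw [hGd] at hx₀; exact hx₀
      set A := m x₀ with hA
      have hmle : ∀ y ∈ Q, m y ≤ A := hx₀'.2
      have hTfin : (S \ F).Finite := hS.subset Set.diff_subset
      have hTne : hTfin.toFinset.Nonempty := by
        rw [Set.Finite.toFinset_nonempty]
        exact ⟨s₀, hs₀S, hs₀F⟩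
      have hlt : ∀ s ∈ S \ F, l s < c := by
        rintro s ⟨hsS, hsF⟩
        have hsQ : s ∈ Q := subset_convexHull ℝ S hsS
        exact lt_of_le_of_ne (hle s hsQ) (fun h => hsF (hmemF s hsQ h))
      set t₀ := hTfin.toFinset.sup' hTne (fun s => (m s - A) / (c - l s)) with ht₀
      set n := m + t₀ • l with hn
      have hnval : ∀ x, n x = m x + t₀ * l x := by
        intro x; simp [hn]
      have hbound : ∀ y ∈ Q, n y ≤ A + t₀ * c := by
        have hconv : Convex ℝ {x : EuclideanSpace ℝ (Fin d) | n x ≤ A + t₀ * c} :=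
          convex_halfSpace_le ⟨n.map_add, n.map_smul⟩ _
        have hsub : S ⊆ {x | n x ≤ A + t₀ * c} := by
          intro s hsS
          have hsQ : s ∈ Q := subset_convexHull ℝ S hsS
          by_cases hsF : s ∈ F
          · have h1 : l s = c := (hFval s hsF).2
            have h2 : m s ≤ A := hmle s hsQ
            simp only [Set.mem_setOf_eq, hnval, h1]
            linarith
          · have hpos : 0 < c - l s := by linarith [hlt s ⟨hsS, hsF⟩]
            have hts : (m s - A) / (c - l s) ≤ t₀ := by
              rw [ht₀]
              exact Finset.le_sup' (fun s => (m s - A) / (c - l s))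
                (hTfin.mem_toFinset.mpr ⟨hsS, hsF⟩)
            have h1 : m s - A ≤ t₀ * (c - l s) := (div_le_iff₀ hpos).mp hts
            simp only [Set.mem_setOf_eq, hnval]
            nlinarith
        exact fun y hy => convexHull_min hsub hconv hy
      have hx₀F : x₀ ∈ F := hGF hx₀
      have hlx₀ : l x₀ = c := (hFval x₀ hx₀F).2
      have hnx₀ : n x₀ = A + t₀ * c := by rw [hnval, hlx₀]
      refine ⟨{x ∈ Q | ∀ y ∈ Q, n y ≤ n x}, ⟨fun _ => ⟨n, rfl⟩, ?_⟩, ?_⟩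
      · -- the sup' is attained at some s* ∉ F which lies in G'
        obtain ⟨s', hs'mem, hs'⟩ := Finset.exists_mem_eq_sup' hTne
          (fun s => (m s - A) / (c - l s))
        rw [Set.Finite.mem_toFinset] at hs'mem
        obtain ⟨hs'S, hs'F⟩ := hs'mem
        have hs'Q : s' ∈ Q := subset_convexHull ℝ S hs'S
        have hpos : 0 < c - l s' := by linarith [hlt s' ⟨hs'S, hs'F⟩]
        have hns' : n s' = A + t₀ * c := by
          have : t₀ * (c - l s') = m s' - A := by
            rw [ht₀, hs']
            exact div_mul_cancel₀ _ hpos.ne'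
          rw [hnval]; nlinarith
        intro hsub
        exact hs'F (hsub ⟨hs'Q, fun y hy => (hbound y hy).trans_eq hns'.symm⟩)
      · ext x
        constructor
        · rintro ⟨⟨hxQ, hxmax⟩, hxF⟩
          have hlx : l x = c := (hFval x hxF).2
          have h1 : A + t₀ * c ≤ n x := hnx₀ ▸ hxmax x₀ hx₀'.1
          have h2 : A ≤ m x := by rw [hnval, hlx] at h1; linarith
          rw [hGd]
          exact ⟨hxQ, fun y hy => (hmle y hy).trans h2⟩
        · intro hxG
          have hxF : x ∈ F := hGF hxG
          have hx' : x ∈ Q ∧ ∀ y ∈ Q, m y ≤ m x := by rw [hGd] at hxG; exact hxG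
          have hmx : m x = A := le_antisymm (hmle x hx'.1) (hx'.2 x₀ hx₀'.1)
          have hlx : l x = c := (hFval x hxF).2
          have hnx : n x = A + t₀ * c := by rw [hnval, hmx, hlx]
          exact ⟨⟨hx'.1, fun y hy => (hbound y hy).trans_eq hnx.symm⟩, hxF⟩

/-- For a polytope `Q` and an exposed face `F ≠ Q`, the number of exposed
faces of `Q` is at most twice the number of exposed faces not contained in `F`. -/
theorem stmt_1 {d : ℕ} (S : Set (EuclideanSpace ℝ (Fin d))) (hS : S.Finite)
    (hSne : S.Nonempty)
    (Q : Set (EuclideanSpace ℝ (Fin d))) (hQ : Q = convexHull ℝ S)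
    (F : Set (EuclideanSpace ℝ (Fin d))) (hF : IsExposed ℝ Q F) (hFQ : F ≠ Q) :
    Set.ncard {G : Set (EuclideanSpace ℝ (Fin d)) | IsExposed ℝ Q G} ≤
      2 * Set.ncard {G : Set (EuclideanSpace ℝ (Fin d)) | IsExposed ℝ Q G ∧ ¬ G ⊆ F} := by
  classical
  subst hQ
  set Q := convexHull ℝ S with hQdef
  set 𝔉 := {G : Set (EuclideanSpace ℝ (Fin d)) | IsExposed ℝ Q G} with h𝔉
  set B := {G : Set (EuclideanSpace ℝ (Fin d)) | IsExposed ℝ Q G ∧ ¬ G ⊆ F} with hB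
  set A := {G : Set (EuclideanSpace ℝ (Fin d)) | IsExposed ℝ Q G ∧ G ⊆ F} with hA
  by_cases hfin : 𝔉.Finite
  · have hAfin : A.Finite := hfin.subset fun G hG => hG.1
    have hBfin : B.Finite := hfin.subset fun G hG => hG.1
    have hunion : 𝔉 = A ∪ B := by
      ext G; by_cases h : G ⊆ F <;> simp [hA, hB, h𝔉, h]
    have hdisj : Disjoint A B := by
      rw [Set.disjoint_iff]
      rintro G ⟨hGA, hGB⟩
      exact absurd hGA.2 hGB.2
    have hsplit : 𝔉.ncard = A.ncard + B.ncard := by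
      rw [hunion, Set.ncard_union_eq hdisj hAfin hBfin]
    -- injection from A to B
    have key : ∀ G ∈ A, ∃ G', G' ∈ B ∧ G' ∩ F = G := by
      rintro G ⟨hG, hGF⟩
      obtain ⟨G', hG', hG'F⟩ := exposed_key S hS hSne F hF hFQ G hG hGF
      exact ⟨G', hG', hG'F⟩
    set f : Set (EuclideanSpace ℝ (Fin d)) → Set (EuclideanSpace ℝ (Fin d)) :=
      fun G => if h : G ∈ A then (key G h).choose else ∅ with hf
    have hfmem : ∀ G ∈ A, f G ∈ B := by
      intro G hG
      rw [hf]; simp only [hG, dif_pos]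
      exact (key G hG).choose_spec.1
    have hfint : ∀ G ∈ A, f G ∩ F = G := by
      intro G hG
      rw [hf]; simp only [hG, dif_pos]
      exact (key G hG).choose_spec.2
    have hinj : Set.InjOn f A := by
      intro G₁ h₁ G₂ h₂ heq
      rw [← hfint G₁ h₁, ← hfint G₂ h₂, heq]
    have hAB : A.ncard ≤ B.ncard := Set.ncard_le_ncard_of_injOn f hfmem hinj hBfin
    calc 𝔉.ncard = A.ncard + B.ncard := hsplit
      _ ≤ B.ncard + B.ncard := by omega
      _ = 2 * B.ncard := by ring
  · rw [Set.Infinite.ncard hfin]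
    exact Nat.zero_le _
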